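/- If G is a graph with γ_g'(G) = 2, then for every edge e of G, γ_g'(G−e) ≤ 3. -/
import Mathlib


open Classical

noncomputable section

namespace DomGame

variable {V : Type*} [Fintype V]

/-- Closed neighborhood of `v` as a `Finset`. -/
noncomputable def N (G : SimpleGraph V) (v : V) : Finset V :=
  Finset.univ.filter (fun u => G.Adj v u ∨ u = v)

/-- Legal moves given the set `S` of already dominated vertices. -/
noncomputable def moves (G : SimpleGraph V) (S : Finset V) : Finset V :=
  Finset.univ.filter (fun v => ¬ N G v ⊆ S)

lemma card_lt {G : SimpleGraph V} {S : Finset V} (v : V) (hv : v ∈ moves G S) :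
    (Finset.univ \ (S ∪ N G v)).card < (Finset.univ \ S).card := by
  simp only [moves, Finset.mem_filter] at hv
  obtain ⟨u, hu, hus⟩ := Finset.not_subset.mp hv.2
  apply Finset.card_lt_card
  refine ⟨Finset.sdiff_subset_sdiff (le_refl _) Finset.subset_union_left, ?_⟩
  intro hsub
  have := hsub (Finset.mem_sdiff.mpr ⟨Finset.mem_univ u, hus⟩)
  rw [Finset.mem_sdiff, Finset.mem_union] at this
  exact this.2 (Or.inr hu)

mutual
/-- Number of moves with optimal play when it is Dominator's turn and
`S` is the set of already dominated vertices. -/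
noncomputable def gameD (G : SimpleGraph V) (S : Finset V) : ℕ :=
  if h : (moves G S).Nonempty then
    1 + (moves G S).attach.inf' (by simpa using h)
      (fun v => gameS G (S ∪ N G v.1))
  else 0
termination_by (Finset.univ \ S).card
decreasing_by exact card_lt v.1 v.2

/-- Number of moves with optimal play when it is Staller's turn. -/
noncomputable def gameS (G : SimpleGraph V) (S : Finset V) : ℕ :=
  if h : (moves G S).Nonempty then
    1 + (moves G S).attach.sup' (by simpa using h)
      (fun v => gameD G (S ∪ N G v.1))
  else 0
termination_by (Finset.univ \ S).card
decreasing_by exact card_lt v.1 v.2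
end

variable {G : SimpleGraph V} {S : Finset V}

lemma mem_N_self (v : V) : v ∈ N G v := by simp [N]

lemma mem_N_iff {w x : V} : x ∈ N G w ↔ G.Adj w x ∨ x = w := by simp [N]

lemma moves_empty_iff : moves G S = ∅ ↔ S = Finset.univ := by
  constructor
  · intro h
    ext x
    simp only [Finset.mem_univ, iff_true]
    by_contra hx
    have hxm : x ∈ moves G S := by
      simp only [moves, Finset.mem_filter, Finset.mem_univ, true_and]
      exact fun hsub => hx (hsub (mem_N_self x))
    rw [h] at hxm
    exact absurd hxm (Finset.notMem_empty x)
  · intro h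
    ext x
    simp [moves, h]

lemma gameD_univ (h : S = Finset.univ) : gameD G S = 0 := by
  rw [gameD, dif_neg]
  rw [Finset.not_nonempty_iff_eq_empty, moves_empty_iff]
  exact h

lemma gameS_univ (h : S = Finset.univ) : gameS G S = 0 := by
  rw [gameS, dif_neg]
  rw [Finset.not_nonempty_iff_eq_empty, moves_empty_iff]
  exact h

lemma eq_univ_of_gameS (h : gameS G S = 0) : S = Finset.univ := by
  by_contra hS
  have hne : (moves G S).Nonempty := by
    rw [Finset.nonempty_iff_ne_empty, Ne, moves_empty_iff]; exact hS
  rw [gameS, dif_pos hne] at h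
  omega

lemma union_univ_of_move (h : (Finset.univ \ S).card ≤ 1) {w : V} (hw : w ∈ moves G S) :
    S ∪ N G w = Finset.univ := by
  simp only [moves, Finset.mem_filter] at hw
  obtain ⟨x, hx, hxs⟩ := Finset.not_subset.mp hw.2
  ext y
  simp only [Finset.mem_univ, iff_true, Finset.mem_union]
  by_cases hy : y ∈ S
  · exact Or.inl hy
  · have h1 : y ∈ Finset.univ \ S := Finset.mem_sdiff.mpr ⟨Finset.mem_univ y, hy⟩
    have h2 : x ∈ Finset.univ \ S := Finset.mem_sdiff.mpr ⟨Finset.mem_univ x, hxs⟩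
    have := Finset.card_le_one.mp h y h1 x h2
    subst this
    exact Or.inr hx

lemma gameS_le_one (h : (Finset.univ \ S).card ≤ 1) : gameS G S ≤ 1 := by
  rw [gameS]
  split_ifs with h1
  · have : ∀ w ∈ (moves G S).attach, gameD G (S ∪ N G w.1) ≤ 0 := by
      intro w _
      exact le_of_eq (gameD_univ (union_univ_of_move h w.2))
    have h2 := Finset.sup'_le (by simpa using h1) (fun w : {x // x ∈ moves G S} => gameD G (S ∪ N G w.1)) this
    omega
  · omega

lemma gameD_le_one (h : (Finset.univ \ S).card ≤ 1) : gameD G S ≤ 1 := by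
  rw [gameD]
  split_ifs with h1
  · obtain ⟨w, hw⟩ := h1
    have h2 := Finset.inf'_le (fun v : {x // x ∈ moves G S} => gameS G (S ∪ N G v.1))
      (Finset.mem_attach _ ⟨w, hw⟩)
    have h3 : gameS G (S ∪ N G w) = 0 := gameS_univ (union_univ_of_move h hw)
    have h4 := le_trans h2 h3.le
    omega
  · omega

lemma gameD_le_two (u : V) (h : (Finset.univ \ (S ∪ N G u)).card ≤ 1) : gameD G S ≤ 2 := by
  by_cases hu : u ∈ moves G S
  · rw [gameD, dif_pos ⟨u, hu⟩]
    have h2 := Finset.inf'_le (fun v : {x // x ∈ moves G S} => gameS G (S ∪ N G v.1))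
      (Finset.mem_attach _ ⟨u, hu⟩)
    have h3 : gameS G (S ∪ N G u) ≤ 1 := gameS_le_one h
    have h4 := le_trans h2 h3
    omega
  · have hsub : N G u ⊆ S := by
      simpa [moves] using hu
    rw [Finset.union_eq_left.mpr hsub] at h
    exact le_trans (gameD_le_one h) (by norm_num)

lemma exists_partner (hG : gameS G ∅ = 2) (v : V) :
    ∃ u, N G v ∪ N G u = Finset.univ := by
  have hv : v ∈ moves G ∅ := Finset.mem_filter.mpr ⟨Finset.mem_univ v,
    fun h => absurd (h (mem_N_self v)) (Finset.notMem_empty v)⟩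
  have hne : (moves G ∅).Nonempty := ⟨v, hv⟩
  rw [gameS, dif_pos hne] at hG
  have h1 := Finset.le_sup' (fun w : {x // x ∈ moves G (∅ : Finset V)} => gameD G (∅ ∪ N G w.1))
    (Finset.mem_attach _ ⟨v, hv⟩)
  have h2 : gameD G (∅ ∪ N G v) ≤ 1 := by
    refine le_trans h1 ?_
    omega
  rw [Finset.empty_union] at h2
  by_cases h3 : (moves G (N G v)).Nonempty
  · rw [gameD, dif_pos h3] at h2
    obtain ⟨w, hw, hval⟩ := Finset.exists_mem_eq_inf' (s := (moves G (N G v)).attach)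
      (by simpa using h3) (fun w => gameS G (N G v ∪ N G w.1))
    refine ⟨w.1, ?_⟩
    have h4 : gameS G (N G v ∪ N G w.1) = 0 := by omega
    exact eq_univ_of_gameS h4
  · refine ⟨v, ?_⟩
    have := moves_empty_iff.mp (Finset.not_nonempty_iff_eq_empty.mp h3)
    simp [this]


lemma miss_edge {a b w x : V} (hx1 : x ∈ N G w)
    (hx2 : x ∉ N (G.deleteEdges {s(a, b)}) w) : s(w, x) = s(a, b) ∧ x ≠ w := by
  rw [mem_N_iff] at hx1 hx2
  push_neg at hx2
  obtain ⟨h1, h2⟩ := hx2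
  rcases hx1 with h3 | h3
  · refine ⟨?_, h2⟩
    by_contra hne
    exact h1 (SimpleGraph.deleteEdges_adj.mpr ⟨h3, by simpa using hne⟩)
  · exact absurd h3 h2

lemma cover {a b v u : V} (hab : G.Adj a b)
    (h : N G v ∪ N G u = Finset.univ) :
    (Finset.univ \ (N (G.deleteEdges {s(a, b)}) v ∪ N (G.deleteEdges {s(a, b)}) u)).card ≤ 1 := by
  rw [Finset.card_le_one]
  have hne : a ≠ b := hab.ne
  intro x hx y hy
  rw [Finset.mem_sdiff, Finset.mem_union] at hx hy
  push_neg at hx hy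
  obtain ⟨-, hxv, hxu⟩ := hx
  obtain ⟨-, hyv, hyu⟩ := hy
  have hxvne : x ≠ v := fun hh => hxv (by rw [hh]; exact mem_N_self v)
  have hxune : x ≠ u := fun hh => hxu (by rw [hh]; exact mem_N_self u)
  have hyvne : y ≠ v := fun hh => hyv (by rw [hh]; exact mem_N_self v)
  have hyune : y ≠ u := fun hh => hyu (by rw [hh]; exact mem_N_self u)
  have hxm : x ∈ N G v ∪ N G u := h ▸ Finset.mem_univ x
  have hym : y ∈ N G v ∪ N G u := h ▸ Finset.mem_univ y
  rw [Finset.mem_union] at hxm hym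
  have Hx : s(v, x) = s(a, b) ∨ s(u, x) = s(a, b) := by
    rcases hxm with hh | hh
    · exact Or.inl (miss_edge hh hxv).1
    · exact Or.inr (miss_edge hh hxu).1
  have Hy : s(v, y) = s(a, b) ∨ s(u, y) = s(a, b) := by
    rcases hym with hh | hh
    · exact Or.inl (miss_edge hh hyv).1
    · exact Or.inr (miss_edge hh hyu).1
  simp only [Sym2.eq_iff] at Hx Hy
  rcases Hx with (⟨h1, h2⟩ | ⟨h1, h2⟩) | (⟨h1, h2⟩ | ⟨h1, h2⟩) <;>
    rcases Hy with (⟨h3, h4⟩ | ⟨h3, h4⟩) | (⟨h3, h4⟩ | ⟨h3, h4⟩) <;>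
      simp_all


/-- The (Dominator-start) game domination number. -/
noncomputable def gammaG (G : SimpleGraph V) : ℕ := gameD G ∅

/-- The Staller-start game domination number. -/
noncomputable def gammaG' (G : SimpleGraph V) : ℕ := gameS G ∅

end DomGame

open DomGame in
/-- If `γ_g'(G) = 2`, then `γ_g'(G−e) ≤ 3` for every edge `e`. -/
theorem gameS_two_edge_removal {V : Type*} [Fintype V] (G : SimpleGraph V)
    (hG : gammaG' G = 2) (e : Sym2 V) (he : e ∈ G.edgeSet) :
    gammaG' (G.deleteEdges {e}) ≤ 3 := by
  revert he
  induction e using Sym2.ind with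
  | _ a b =>
  intro he
  rw [SimpleGraph.mem_edgeSet] at he
  rw [gammaG'] at hG ⊢
  by_cases h0 : (moves (G.deleteEdges {s(a, b)}) (∅ : Finset V)).Nonempty
  · rw [gameS, dif_pos h0]
    have hsup : ∀ w ∈ (moves (G.deleteEdges {s(a, b)}) (∅ : Finset V)).attach,
        gameD (G.deleteEdges {s(a, b)}) (∅ ∪ N (G.deleteEdges {s(a, b)}) w.1) ≤ 2 := by
      intro w _
      rw [Finset.empty_union]
      obtain ⟨u, hu⟩ := exists_partner hG w.1
      exact gameD_le_two u (cover he hu)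
    have h2 := Finset.sup'_le (by simpa using h0)
      (fun w : {x // x ∈ moves (G.deleteEdges {s(a, b)}) (∅ : Finset V)} =>
        gameD (G.deleteEdges {s(a, b)}) (∅ ∪ N (G.deleteEdges {s(a, b)}) w.1)) hsup
    omega
  · rw [gameS, dif_neg h0]
    omega
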